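/- arXiv:0812.4482 — 12 statements merged into one kernel-verified Lean document; each statement's English description precedes it below -/
import Mathlib

section
/- For any elements g, h of the finite group G, the linear map T_h(g) maps the subspace 𝒞_h onto the subspace 𝒞_{ghg⁻¹}, i.e. T_h(g)(𝒞_h) = 𝒞_{ghg⁻¹}. -/
open scoped TensorProduct

noncomputable section

variable {K : Type*} [Field K] {G : Type*} [Group G]
  {A : Type*} [Ring A] [Algebra K A] {ι : Type*} [Fintype ι]

/-- The subspace `𝒞_h = span{c₁c₂ − c₂·h(c₁) | c₁, c₂ ∈ 𝒞}`. -/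
def commSub (ρ : G → A ≃ₐ[K] A) (h : G) : Submodule K A :=
  Submodule.span K {x | ∃ c₁ c₂ : A, x = c₁ * c₂ - c₂ * ρ h c₁}

/-- The map `T_h(g)(c) = c_e⁻¹ c_{g,g⁻¹}⁻¹ g(c) c_{g,h} c_{gh,g⁻¹}`. -/
def Tmap (ρ : G → A ≃ₐ[K] A) (u : G → G → Aˣ) (ue : Aˣ) (g h : G) (x : A) : A :=
  (↑(ue⁻¹) : A) * (↑((u g g⁻¹)⁻¹) : A) * ρ g x * (↑(u g h) : A) * (↑(u (g * h) g⁻¹) : A)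

/-- The twisted multiplication `m_{g,h}(c′⊗c″) = Σᵢ ξ′ᵢ c′ g(ξ″ᵢ c″) c_{g,h}`. -/
def mMul (ρ : G → A ≃ₐ[K] A) (u : G → G → Aˣ) (ξ₁ ξ₂ : ι → A) (g h : G)
    (c' c'' : A) : A :=
  ∑ i, ξ₁ i * c' * ρ g (ξ₂ i * c'') * (↑(u g h) : A)

/-- The twisted comultiplication `Δ_{g,h}(c) = Σᵢ c c_{g,h}⁻¹ g(ξ′ᵢ) ⊗ ξ″ᵢ`. -/
def ΔCom (ρ : G → A ≃ₐ[K] A) (u : G → G → Aˣ) (ξ₁ ξ₂ : ι → A) (g h : G)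
    (c : A) : A ⊗[K] A :=
  ∑ i, (c * (↑((u g h)⁻¹) : A) * ρ g (ξ₁ i)) ⊗ₜ[K] ξ₂ i

/-- The subspace `𝒞_g ⊗ 𝒞` of `𝒞 ⊗ 𝒞`. -/
def leftTensor (ρ : G → A ≃ₐ[K] A) (g : G) : Submodule K (A ⊗[K] A) :=
  Submodule.span K {z | ∃ x ∈ commSub ρ g, ∃ y : A, z = x ⊗ₜ[K] y}

/-- The subspace `𝒞 ⊗ 𝒞_h` of `𝒞 ⊗ 𝒞`. -/
def rightTensor (ρ : G → A ≃ₐ[K] A) (h : G) : Submodule K (A ⊗[K] A) :=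
  Submodule.span K {z | ∃ x : A, ∃ y ∈ commSub ρ h, z = x ⊗ₜ[K] y}

namespace TmapAux

variable (ρ : G → A ≃ₐ[K] A)

lemma gen_mem (h : G) (c₁ c₂ : A) :
    c₁ * c₂ - c₂ * ρ h c₁ ∈ commSub ρ h :=
  Submodule.subset_span ⟨c₁, c₂, rfl⟩

lemma Tmap_mem (g h k : G) (P Q V : Aˣ)
    (hQP : (Q : A) * ρ k ↑P = ↑V)
    (hV : ∀ x : A, ρ g (ρ h x) * (↑V : A) = ↑V * ρ k (ρ g x))
    {x : A} (hx : x ∈ commSub ρ h) :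
    (↑P : A) * ρ g x * ↑Q ∈ commSub ρ k := by
  induction hx using Submodule.span_induction with
  | mem y hy =>
    obtain ⟨c₁, c₂, rfl⟩ := hy
    have key : (↑Q : A) * (ρ k ↑P * ρ k (ρ g c₁)) = ρ g (ρ h c₁) * ((↑Q : A) * ρ k ↑P) := by
      rw [← mul_assoc, hQP, hV]
    have e1 : (↑P : A) * ρ g (c₁ * c₂ - c₂ * ρ h c₁) * ↑Q =
        ((↑P * ρ g c₁) * (ρ g c₂ * ↑Q) - (ρ g c₂ * ↑Q) * ρ k (↑P * ρ g c₁))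
        - ((↑P : A) * (ρ g c₂ * ρ g (ρ h c₁) * ↑Q) - (ρ g c₂ * ρ g (ρ h c₁) * ↑Q) * ρ k ↑P) := by
      simp only [map_sub, map_mul, sub_mul, mul_sub]
      have t : (ρ g c₂ * (↑Q : A)) * (ρ k ↑P * ρ k (ρ g c₁))
          = (ρ g c₂ * ρ g (ρ h c₁) * ↑Q) * ρ k ↑P := by
        rw [mul_assoc (ρ g c₂), key]; noncomm_ring
      rw [t]; noncomm_ring
    rw [e1]
    exact Submodule.sub_mem _ (gen_mem ρ k _ _) (gen_mem ρ k _ _)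
  | zero => simpa using Submodule.zero_mem _
  | add y z _ _ hy hz =>
    have : (↑P : A) * ρ g (y + z) * ↑Q = ↑P * ρ g y * ↑Q + ↑P * ρ g z * ↑Q := by
      rw [map_add]; noncomm_ring
    rw [this]; exact Submodule.add_mem _ hy hz
  | smul r y _ hy =>
    have : (↑P : A) * ρ g (r • y) * ↑Q = r • ((↑P : A) * ρ g y * ↑Q) := by
      rw [map_smul, Algebra.mul_smul_comm, Algebra.smul_mul_assoc]
    rw [this]; exact Submodule.smul_mem _ _ hy

lemma Smap_mem (g h k : G) (P Q V : Aˣ)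
    (hQP : (Q : A) * ρ k ↑P = ↑V)
    (hV : ∀ x : A, ρ g (ρ h x) * (↑V : A) = ↑V * ρ k (ρ g x))
    {y : A} (hy : y ∈ commSub ρ k) :
    (ρ g).symm ((↑P⁻¹ : A) * y * ↑Q⁻¹) ∈ commSub ρ h := by
  have hσ : ∀ z : A, ρ h ((ρ g).symm z) = (ρ g).symm ((↑V : A) * ρ k z * ↑V⁻¹) := by
    intro z
    apply (ρ g).injective
    rw [AlgEquiv.apply_symm_apply]
    have := hV ((ρ g).symm z)
    rw [AlgEquiv.apply_symm_apply] at this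
    calc ρ g (ρ h ((ρ g).symm z)) = ρ g (ρ h ((ρ g).symm z)) * ↑V * ↑V⁻¹ := by
          simp [mul_assoc]
      _ = ↑V * ρ k z * ↑V⁻¹ := by rw [this]
  have hQV : (↑Q⁻¹ : A) * ↑V = ρ k ↑P := by
    rw [← hQP]; simp [← mul_assoc]
  have hPP : ρ k (↑P : A) * ρ k (↑P⁻¹ : A) = 1 := by
    rw [← map_mul]; simp
  induction hy using Submodule.span_induction with
  | mem y hy =>
    obtain ⟨a, b, rfl⟩ := hy
    have e1 : (ρ g).symm ((↑P⁻¹ : A) * (a * b - b * ρ k a) * ↑Q⁻¹) =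
        ((ρ g).symm (↑P⁻¹ * a) * (ρ g).symm (b * ↑Q⁻¹)
          - (ρ g).symm (b * ↑Q⁻¹) * ρ h ((ρ g).symm (↑P⁻¹ * a)))
        - ((ρ g).symm (↑P⁻¹ : A) * (ρ g).symm (b * ρ k a * ↑Q⁻¹)
          - (ρ g).symm (b * ρ k a * ↑Q⁻¹) * ρ h ((ρ g).symm (↑P⁻¹ : A))) := by
      rw [hσ, hσ, ← map_mul, ← map_mul, ← map_mul, ← map_mul, ← map_sub, ← map_sub, ← map_sub]
      congr 1
      have t1 : (b * (↑Q⁻¹ : A)) * ((↑V : A) * ρ k ((↑P⁻¹ : A) * a) * ↑V⁻¹)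
          = b * ρ k a * ↑V⁻¹ := by
        rw [map_mul]
        calc (b * (↑Q⁻¹ : A)) * ((↑V : A) * (ρ k (↑P⁻¹ : A) * ρ k a) * ↑V⁻¹)
            = b * ((↑Q⁻¹ : A) * ↑V) * ρ k (↑P⁻¹ : A) * ρ k a * ↑V⁻¹ := by noncomm_ring
          _ = b * ρ k a * ↑V⁻¹ := by rw [hQV, mul_assoc (b : A), hPP, mul_one]
      have t2 : (b * ρ k a * (↑Q⁻¹ : A)) * ((↑V : A) * ρ k (↑P⁻¹ : A) * ↑V⁻¹)
          = b * ρ k a * ↑V⁻¹ := by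
        calc (b * ρ k a * (↑Q⁻¹ : A)) * ((↑V : A) * ρ k (↑P⁻¹ : A) * ↑V⁻¹)
            = b * ρ k a * ((↑Q⁻¹ : A) * ↑V) * ρ k (↑P⁻¹ : A) * ↑V⁻¹ := by noncomm_ring
          _ = b * ρ k a * ↑V⁻¹ := by rw [hQV, mul_assoc (b * ρ k a), hPP, mul_one]
      rw [t1, t2]
      noncomm_ring
    rw [e1]
    exact Submodule.sub_mem _ (gen_mem ρ h _ _) (gen_mem ρ h _ _)
  | zero => simpa using Submodule.zero_mem _
  | add y z _ _ hy hz =>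
    have : (ρ g).symm ((↑P⁻¹ : A) * (y + z) * ↑Q⁻¹)
        = (ρ g).symm ((↑P⁻¹ : A) * y * ↑Q⁻¹) + (ρ g).symm ((↑P⁻¹ : A) * z * ↑Q⁻¹) := by
      rw [← map_add]; congr 1; noncomm_ring
    rw [this]; exact Submodule.add_mem _ hy hz
  | smul r y _ hy =>
    have : (ρ g).symm ((↑P⁻¹ : A) * (r • y) * ↑Q⁻¹)
        = r • (ρ g).symm ((↑P⁻¹ : A) * y * ↑Q⁻¹) := by
      rw [← map_smul]; congr 1
      rw [Algebra.mul_smul_comm, Algebra.smul_mul_assoc]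
    rw [this]; exact Submodule.smul_mem _ _ hy

end TmapAux
theorem Tmap_image_commSub
    [Fintype G] (ρ : G → A ≃ₐ[K] A) (u : G → G → Aˣ) (ue : Aˣ)
    (hAd : ∀ (g h : G) (x : A),
      ρ g (ρ h x) = (↑(u g h) : A) * ρ (g * h) x * (↑((u g h)⁻¹) : A))
    (hAde : ∀ x : A, ρ (1 : G) x = (↑ue : A) * x * (↑(ue⁻¹) : A))
    (hcoc : ∀ g h k : G,
      (↑(u g h) : A) * (↑(u (g * h) k) : A) = ρ g (↑(u h k) : A) * (↑(u g (h * k)) : A))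
    (hue1 : ∀ g : G, (↑(u g 1) : A) = ρ g (↑ue : A))
    (hue2 : ∀ g : G, (↑(u 1 g) : A) = (↑ue : A))
    (g h : G) :
    Tmap ρ u ue g h '' (commSub ρ h : Set A) = (commSub ρ (g * h * g⁻¹) : Set A) := by
  set k := g * h * g⁻¹ with hkdef
  have kg : k * g = g * h := by rw [hkdef]; group
  set P : Aˣ := (u g g⁻¹ * ue)⁻¹ with hPdef
  set Q : Aˣ := u g h * u (g * h) g⁻¹ with hQdef
  set V : Aˣ := u g h * (u k g)⁻¹ with hVdef
  have hkgA : ρ k ((↑(u g g⁻¹) : A) * ↑ue) = ↑(u k g) * ↑(u (g * h) g⁻¹) := by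
    have hc := hcoc k g g⁻¹
    rw [kg, mul_inv_cancel, hue1 k] at hc
    rw [map_mul, hc]
  have hPinv : ρ k (↑P : A) = ↑((u k g * u (g * h) g⁻¹)⁻¹) := by
    symm
    apply Units.inv_eq_of_mul_eq_one_right
    rw [Units.val_mul, ← hkgA, ← map_mul]
    have h1 : ((↑(u g g⁻¹) : A) * ↑ue) * ↑P = 1 := by
      rw [← Units.val_mul, hPdef, Units.mul_inv]
    rw [h1, map_one]
  have hQP : (↑Q : A) * ρ k ↑P = ↑V := by
    rw [hPinv, ← Units.val_mul]
    exact congrArg Units.val (by rw [hQdef, hVdef]; group)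
  have hV : ∀ x : A, ρ g (ρ h x) * (↑V : A) = ↑V * ρ k (ρ g x) := by
    intro x
    have h2 := hAd k g x
    rw [kg] at h2
    rw [hAd g h x, h2, hVdef]
    simp [Units.val_mul, mul_assoc]
  have hT : ∀ x : A, Tmap ρ u ue g h x = ↑P * ρ g x * ↑Q := by
    intro x
    rw [hPdef, hQdef]
    simp [Tmap, mul_inv_rev, Units.val_mul, mul_assoc]
  apply Set.Subset.antisymm
  · rintro y ⟨x, hx, rfl⟩
    rw [SetLike.mem_coe] at hx ⊢
    rw [hT]
    exact TmapAux.Tmap_mem ρ g h k P Q V hQP hV hx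
  · intro y hy
    rw [SetLike.mem_coe] at hy
    refine ⟨(ρ g).symm ((↑P⁻¹ : A) * y * ↑Q⁻¹), ?_, ?_⟩
    · exact TmapAux.Smap_mem ρ g h k P Q V hQP hV hy
    · rw [hT, AlgEquiv.apply_symm_apply]
      simp [mul_assoc]
end
end

section
/- For any g ∈ G and any c ∈ 𝒞, the element T_g(g)(c) = c_e⁻¹ c_{g,g⁻¹}⁻¹ g(c) c_{g,g} c_{g²,g⁻¹} is congruent to c modulo the subspace 𝒞_g; equivalently, the induced operator 𝒯(g) restricted to HH₀(𝒞)_g = 𝒞/𝒞_g is the identity. -/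
open scoped TensorProduct

noncomputable section

variable {K : Type*} [Field K] {G : Type*} [Group G]
  {A : Type*} [Ring A] [Algebra K A] {ι : Type*} [Fintype ι]

theorem Tmap_diag_congr_id
    [Fintype G] (ρ : G → A ≃ₐ[K] A) (u : G → G → Aˣ) (ue : Aˣ)
    (hAd : ∀ (g h : G) (x : A),
      ρ g (ρ h x) = (↑(u g h) : A) * ρ (g * h) x * (↑((u g h)⁻¹) : A))
    (hAde : ∀ x : A, ρ (1 : G) x = (↑ue : A) * x * (↑(ue⁻¹) : A))
    (hcoc : ∀ g h k : G,
      (↑(u g h) : A) * (↑(u (g * h) k) : A) = ρ g (↑(u h k) : A) * (↑(u g (h * k)) : A))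
    (hue1 : ∀ g : G, (↑(u g 1) : A) = ρ g (↑ue : A))
    (hue2 : ∀ g : G, (↑(u 1 g) : A) = (↑ue : A))
    (g : G) (c : A) :
    Tmap ρ u ue g g c - c ∈ commSub ρ g := by
  have key : ∀ a b : A, a * b - b * ρ g a ∈ commSub ρ g :=
    fun a b => Submodule.subset_span ⟨a, b, rfl⟩
  set a : A := (↑(ue⁻¹) : A) * (↑((u g g⁻¹)⁻¹) : A) with ha
  set b : A := ρ g c * (↑(u g g) : A) * (↑(u (g * g) g⁻¹) : A) with hb
  have hT : Tmap ρ u ue g g c = a * b := by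
    simp [Tmap, ha, hb, mul_assoc]
  have hba : b * ρ g a = ρ g c := by
    have hc : (↑(u g g) : A) * (↑(u (g * g) g⁻¹) : A)
        = ρ g ((↑(u g g⁻¹) : A) * (↑ue : A)) := by
      rw [hcoc g g g⁻¹, mul_inv_cancel, hue1, ← map_mul]
    rw [hb, ha, mul_assoc (ρ g c), hc, ← map_mul, ← map_mul]
    have : (↑(u g g⁻¹) : A) * (↑ue : A) * ((↑(ue⁻¹) : A) * (↑((u g g⁻¹)⁻¹) : A)) = 1 := by
      simp [mul_assoc]
    rw [mul_assoc c, this, mul_one]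
  have h1 : Tmap ρ u ue g g c - ρ g c ∈ commSub ρ g := by
    rw [hT, ← hba]; exact key a b
  have h2 : c - ρ g c ∈ commSub ρ g := by simpa using key c 1
  have heq : Tmap ρ u ue g g c - c
      = (Tmap ρ u ue g g c - ρ g c) - (c - ρ g c) := by abel
  rw [heq]
  exact sub_mem h1 h2
end
end

section
/- For any g, h ∈ G, the map m_{g,h}: 𝒞⊗𝒞 → 𝒞 annihilates 𝒞_g ⊗ 𝒞; explicitly, for all c₁, c₂, c″ ∈ 𝒞 one has Σᵢ ξ′ᵢ (c₁c₂ − c₂·g(c₁)) g(ξ″ᵢ c″) c_{g,h} = 0 in 𝒞. -/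
open scoped TensorProduct

noncomputable section

variable {K : Type*} [Field K] {G : Type*} [Group G]
  {A : Type*} [Ring A] [Algebra K A] {ι : Type*} [Fintype ι]

theorem mMul_annihilates_left
    [Fintype G] (ρ : G → A ≃ₐ[K] A) (u : G → G → Aˣ) (ue : Aˣ)
    (hAd : ∀ (g h : G) (x : A),
      ρ g (ρ h x) = (↑(u g h) : A) * ρ (g * h) x * (↑((u g h)⁻¹) : A))
    (hAde : ∀ x : A, ρ (1 : G) x = (↑ue : A) * x * (↑(ue⁻¹) : A))
    (hcoc : ∀ g h k : G,
      (↑(u g h) : A) * (↑(u (g * h) k) : A) = ρ g (↑(u h k) : A) * (↑(u g (h * k)) : A))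
    (hue1 : ∀ g : G, (↑(u g 1) : A) = ρ g (↑ue : A))
    (hue2 : ∀ g : G, (↑(u 1 g) : A) = (↑ue : A))
    [FiniteDimensional K A] (θ : A →ₗ[K] K)
    (htr : ∀ a b : A, θ (a * b) = θ (b * a))
    (hnd : ∀ a : A, (∀ b : A, θ (a * b) = 0) → a = 0)
    (hGinv : ∀ (g : G) (a : A), θ (ρ g a) = θ a)
    (ξ₁ ξ₂ : ι → A)
    (hξ : ∀ a : A, a = ∑ i, θ (a * ξ₂ i) • ξ₁ i)
    (hξsym : (∑ i, ξ₁ i ⊗ₜ[K] ξ₂ i) = ∑ i, ξ₂ i ⊗ₜ[K] ξ₁ i)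
    (g h : G) (c₁ c₂ c'' : A) :
    ∑ i, ξ₁ i * (c₁ * c₂ - c₂ * ρ g c₁) * ρ g (ξ₂ i * c'') * (↑(u g h) : A) = 0 := by
  -- reversed reproducing identity
  have hξ' : ∀ a : A, a = ∑ i, θ (a * ξ₁ i) • ξ₂ i := by
    intro a
    let f : A →ₗ[K] A →ₗ[K] A := LinearMap.mk₂ K (fun x y => θ (a * x) • y)
      (by intros; simp [mul_add, add_smul])
      (by intros; simp [mul_smul_comm, smul_smul])
      (by intros; simp [smul_add])
      (by intros; simp [smul_smul, mul_comm])
    have h2 := congrArg (TensorProduct.lift f) hξsym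
    simp only [map_sum, TensorProduct.lift.tmul, LinearMap.mk₂_apply, f] at h2
    rw [h2]
    exact hξ a
  -- Casimir commuting identity
  have hcas : (∑ i, (ξ₁ i * c₁) ⊗ₜ[K] ξ₂ i) = ∑ i, ξ₁ i ⊗ₜ[K] (c₁ * ξ₂ i) := by
    have L : ∀ i, (ξ₁ i * c₁) ⊗ₜ[K] ξ₂ i
        = ∑ j, θ (ξ₁ i * c₁ * ξ₂ j) • (ξ₁ j ⊗ₜ[K] ξ₂ i) := by
      intro i
      conv_lhs => rw [hξ (ξ₁ i * c₁)]
      rw [TensorProduct.sum_tmul]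
      simp [TensorProduct.smul_tmul', mul_assoc]
    have R : ∀ i, ξ₁ i ⊗ₜ[K] (c₁ * ξ₂ i)
        = ∑ j, θ (c₁ * ξ₂ i * ξ₁ j) • (ξ₁ i ⊗ₜ[K] ξ₂ j) := by
      intro i
      conv_lhs => rw [hξ' (c₁ * ξ₂ i)]
      rw [TensorProduct.tmul_sum]
      simp [TensorProduct.tmul_smul, mul_assoc]
    calc (∑ i, (ξ₁ i * c₁) ⊗ₜ[K] ξ₂ i)
        = ∑ i, ∑ j, θ (ξ₁ i * c₁ * ξ₂ j) • (ξ₁ j ⊗ₜ[K] ξ₂ i) :=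
          Finset.sum_congr rfl fun i _ => L i
      _ = ∑ j, ∑ i, θ (ξ₁ i * c₁ * ξ₂ j) • (ξ₁ j ⊗ₜ[K] ξ₂ i) := Finset.sum_comm
      _ = ∑ i, ∑ j, θ (c₁ * ξ₂ i * ξ₁ j) • (ξ₁ i ⊗ₜ[K] ξ₂ j) := by
          refine Finset.sum_congr rfl fun i _ => Finset.sum_congr rfl fun j _ => ?_
          rw [mul_assoc, htr]
      _ = ∑ i, ξ₁ i ⊗ₜ[K] (c₁ * ξ₂ i) :=
          Finset.sum_congr rfl fun i _ => (R i).symm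
  -- apply the bilinear map a ⊗ b ↦ a * c₂ * ρ g (b * c'') * u g h
  let Φ : A →ₗ[K] A →ₗ[K] A := LinearMap.mk₂ K
      (fun a b => a * c₂ * ρ g (b * c'') * (↑(u g h) : A))
      (by intros; simp [add_mul])
      (by intros; simp [smul_mul_assoc])
      (by intros; simp [add_mul, mul_add, map_add])
      (by intros; simp [smul_mul_assoc, mul_smul_comm, map_smul])
  have key := congrArg (TensorProduct.lift Φ) hcas
  simp only [map_sum, TensorProduct.lift.tmul, LinearMap.mk₂_apply, Φ] at key
  have expand : ∀ i, ξ₁ i * (c₁ * c₂ - c₂ * ρ g c₁) * ρ g (ξ₂ i * c'') * (↑(u g h) : A)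
      = ξ₁ i * c₁ * c₂ * ρ g (ξ₂ i * c'') * (↑(u g h) : A)
        - ξ₁ i * c₂ * ρ g (c₁ * ξ₂ i * c'') * (↑(u g h) : A) := by
    intro i
    have h3 : ρ g (c₁ * ξ₂ i * c'') = ρ g c₁ * ρ g (ξ₂ i * c'') := by
      rw [mul_assoc, map_mul]
    rw [h3]
    noncomm_ring
  rw [Finset.sum_congr rfl fun i _ => expand i, Finset.sum_sub_distrib, key, sub_self]
end
end

section
/- For any g, h ∈ G, the map m_{g,h} sends 𝒞 ⊗ 𝒞_h into 𝒞_{gh}; explicitly, for all c′, c₁, c₂ ∈ 𝒞 the element Σᵢ ξ′ᵢ c′ g(ξ″ᵢ (c₁c₂ − c₂·h(c₁))) c_{g,h} lies in 𝒞_{gh}. Hence m_{g,h} descends to a well-defined linear map HH₀(𝒞)_g ⊗ HH₀(𝒞)_h → HH₀(𝒞)_{gh}. -/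
open scoped TensorProduct

noncomputable section

variable {K : Type*} [Field K] {G : Type*} [Group G]
  {A : Type*} [Ring A] [Algebra K A] {ι : Type*} [Fintype ι]

section Aux
variable {K : Type*} [Field K] {A : Type*} [Ring A] [Algebra K A] {ι : Type*} [Fintype ι]

lemma dual_symm' (θ : A →ₗ[K] K) (ξ₁ ξ₂ : ι → A)
    (hξ : ∀ a : A, a = ∑ i, θ (a * ξ₂ i) • ξ₁ i)
    (hξsym : (∑ i, ξ₁ i ⊗ₜ[K] ξ₂ i) = ∑ i, ξ₂ i ⊗ₜ[K] ξ₁ i)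
    (a : A) : a = ∑ i, θ (a * ξ₁ i) • ξ₂ i := by
  let L : A ⊗[K] A →ₗ[K] A := TensorProduct.lift
    (LinearMap.mk₂ K (fun x y => θ (a * y) • x)
      (fun m₁ m₂ n => smul_add _ _ _)
      (fun c m n => smul_comm _ _ _)
      (fun m n₁ n₂ => by simp only [mul_add, map_add, add_smul])
      (fun c m n => by simp only [mul_smul_comm, map_smul, smul_assoc]))
  have := congrArg L hξsym
  simp only [L, map_sum, TensorProduct.lift.tmul, LinearMap.mk₂_apply] at this
  rw [← this, ← hξ a]

lemma casimir' (θ : A →ₗ[K] K) (ξ₁ ξ₂ : ι → A)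
    (htr : ∀ a b : A, θ (a * b) = θ (b * a))
    (hξ : ∀ a : A, a = ∑ i, θ (a * ξ₂ i) • ξ₁ i)
    (hξsym : (∑ i, ξ₁ i ⊗ₜ[K] ξ₂ i) = ∑ i, ξ₂ i ⊗ₜ[K] ξ₁ i)
    (a : A) : (∑ i, (a * ξ₁ i) ⊗ₜ[K] ξ₂ i) = ∑ i, ξ₁ i ⊗ₜ[K] (ξ₂ i * a) := by
  have hξ' := dual_symm' θ ξ₁ ξ₂ hξ hξsym
  calc ∑ i, (a * ξ₁ i) ⊗ₜ[K] ξ₂ i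
      = ∑ i, (∑ j, θ (a * ξ₁ i * ξ₂ j) • ξ₁ j) ⊗ₜ[K] ξ₂ i := by
        refine Finset.sum_congr rfl fun i _ => ?_
        rw [← hξ (a * ξ₁ i)]
    _ = ∑ i, ∑ j, θ (a * ξ₁ i * ξ₂ j) • (ξ₁ j ⊗ₜ[K] ξ₂ i) := by
        simp [TensorProduct.sum_tmul, TensorProduct.smul_tmul']
    _ = ∑ j, ∑ i, θ (a * ξ₁ i * ξ₂ j) • (ξ₁ j ⊗ₜ[K] ξ₂ i) := Finset.sum_comm
    _ = ∑ j, ξ₁ j ⊗ₜ[K] (∑ i, θ (ξ₂ j * a * ξ₁ i) • ξ₂ i) := by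
        refine Finset.sum_congr rfl fun j _ => ?_
        rw [TensorProduct.tmul_sum]
        refine Finset.sum_congr rfl fun i _ => ?_
        rw [TensorProduct.tmul_smul, htr (a * ξ₁ i) (ξ₂ j), ← mul_assoc]
    _ = ∑ j, ξ₁ j ⊗ₜ[K] (ξ₂ j * a) := by
        refine Finset.sum_congr rfl fun j _ => ?_
        rw [← hξ' (ξ₂ j * a)]

end Aux

theorem mMul_right_commSub
    [Fintype G] (ρ : G → A ≃ₐ[K] A) (u : G → G → Aˣ) (ue : Aˣ)
    (hAd : ∀ (g h : G) (x : A),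
      ρ g (ρ h x) = (↑(u g h) : A) * ρ (g * h) x * (↑((u g h)⁻¹) : A))
    (hAde : ∀ x : A, ρ (1 : G) x = (↑ue : A) * x * (↑(ue⁻¹) : A))
    (hcoc : ∀ g h k : G,
      (↑(u g h) : A) * (↑(u (g * h) k) : A) = ρ g (↑(u h k) : A) * (↑(u g (h * k)) : A))
    (hue1 : ∀ g : G, (↑(u g 1) : A) = ρ g (↑ue : A))
    (hue2 : ∀ g : G, (↑(u 1 g) : A) = (↑ue : A))
    [FiniteDimensional K A] (θ : A →ₗ[K] K)
    (htr : ∀ a b : A, θ (a * b) = θ (b * a))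
    (hnd : ∀ a : A, (∀ b : A, θ (a * b) = 0) → a = 0)
    (hGinv : ∀ (g : G) (a : A), θ (ρ g a) = θ a)
    (ξ₁ ξ₂ : ι → A)
    (hξ : ∀ a : A, a = ∑ i, θ (a * ξ₂ i) • ξ₁ i)
    (hξsym : (∑ i, ξ₁ i ⊗ₜ[K] ξ₂ i) = ∑ i, ξ₂ i ⊗ₜ[K] ξ₁ i)
    (g h : G) (c' c₁ c₂ : A) :
    ∑ i, ξ₁ i * c' * ρ g (ξ₂ i * (c₁ * c₂ - c₂ * ρ h c₁)) * (↑(u g h) : A) ∈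
      commSub ρ (g * h) := by

  have hcas := casimir' θ ξ₁ ξ₂ htr hξ hξsym c₁
  set X : A := ∑ i, ξ₁ i * c' * ρ g (ξ₂ i * c₂) * (↑(u g h) : A) with hX
  -- Term 1 via Casimir
  have hterm1 : ∑ i, ξ₁ i * c' * ρ g (ξ₂ i * (c₁ * c₂)) * (↑(u g h) : A) = c₁ * X := by
    let L : A ⊗[K] A →ₗ[K] A := TensorProduct.lift
      (LinearMap.mk₂ K (fun x y => x * c' * ρ g (y * c₂) * (↑(u g h) : A))
        (fun m₁ m₂ n => by simp only [add_mul])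
        (fun c m n => by simp only [smul_mul_assoc])
        (fun m n₁ n₂ => by simp only [add_mul, map_add, mul_add])
        (fun c m n => by simp only [smul_mul_assoc, map_smul, mul_smul_comm]))
    have := congrArg L hcas
    simp only [L, map_sum, TensorProduct.lift.tmul, LinearMap.mk₂_apply] at this
    rw [hX, Finset.mul_sum]
    rw [show (∑ i, ξ₁ i * c' * ρ g (ξ₂ i * (c₁ * c₂)) * (↑(u g h) : A))
        = ∑ i, ξ₁ i * c' * ρ g (ξ₂ i * c₁ * c₂) * (↑(u g h) : A) by
      simp only [mul_assoc]]
    rw [← this]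
    simp only [mul_assoc]
  -- Term 2 via hAd
  have hterm2 : ∑ i, ξ₁ i * c' * ρ g (ξ₂ i * (c₂ * ρ h c₁)) * (↑(u g h) : A)
      = X * ρ (g * h) c₁ := by
    rw [hX, Finset.sum_mul]
    refine Finset.sum_congr rfl fun i _ => ?_
    have : ρ g (ξ₂ i * (c₂ * ρ h c₁)) = ρ g (ξ₂ i * c₂) * ρ g (ρ h c₁) := by
      rw [← map_mul, mul_assoc]
    rw [this, hAd g h c₁]
    have hinv : (↑((u g h)⁻¹) : A) * (↑(u g h) : A) = 1 := Units.inv_mul _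
    calc ξ₁ i * c' * (ρ g (ξ₂ i * c₂) * ((↑(u g h) : A) * ρ (g * h) c₁ * (↑((u g h)⁻¹) : A)))
          * (↑(u g h) : A)
        = ξ₁ i * c' * ρ g (ξ₂ i * c₂) * (↑(u g h) : A) * ρ (g * h) c₁
          * ((↑((u g h)⁻¹) : A) * (↑(u g h) : A)) := by simp only [mul_assoc]
      _ = ξ₁ i * c' * ρ g (ξ₂ i * c₂) * (↑(u g h) : A) * ρ (g * h) c₁ := by rw [hinv, mul_one]
  have hsplit : ∑ i, ξ₁ i * c' * ρ g (ξ₂ i * (c₁ * c₂ - c₂ * ρ h c₁)) * (↑(u g h) : A)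
      = c₁ * X - X * ρ (g * h) c₁ := by
    rw [← hterm1, ← hterm2, ← Finset.sum_sub_distrib]
    refine Finset.sum_congr rfl fun i _ => ?_
    rw [mul_sub, map_sub, mul_sub, sub_mul]
  rw [hsplit]
  exact Submodule.subset_span ⟨c₁, X, rfl⟩
end
end

section
/- For any g, h ∈ G, the map Δ_{g,h} sends 𝒞_{gh} into 𝒞_g ⊗ 𝒞 + 𝒞 ⊗ 𝒞_h; explicitly, for all c₁, c₂ ∈ 𝒞 the element Σᵢ (c₁c₂ − c₂·(gh)(c₁)) c_{g,h}⁻¹ g(ξ′ᵢ) ⊗ ξ″ᵢ lies in 𝒞_g ⊗ 𝒞 + 𝒞 ⊗ 𝒞_h. Hence Δ_{g,h} descends to a well-defined linear map HH₀(𝒞)_{gh} → HH₀(𝒞)_g ⊗ HH₀(𝒞)_h. -/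
open scoped TensorProduct

noncomputable section

variable {K : Type*} [Field K] {G : Type*} [Group G]
  {A : Type*} [Ring A] [Algebra K A] {ι : Type*} [Fintype ι]

section Aux
variable (θ : A →ₗ[K] K)

lemma reconstruct2 (θ : A →ₗ[K] K)
    (ξ₁ ξ₂ : ι → A) (hξ : ∀ a : A, a = ∑ i, θ (a * ξ₂ i) • ξ₁ i)
    (hξsym : (∑ i, ξ₁ i ⊗ₜ[K] ξ₂ i) = ∑ i, ξ₂ i ⊗ₜ[K] ξ₁ i) :
    ∀ a : A, a = ∑ i, θ (a * ξ₁ i) • ξ₂ i := by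
  intro a
  have hc := congrArg
    (TensorProduct.lift ((LinearMap.lsmul K A).comp (θ.comp (LinearMap.mulLeft K a)))) hξsym
  simp only [map_sum, TensorProduct.lift.tmul, LinearMap.comp_apply, LinearMap.lsmul_apply,
    LinearMap.mulLeft_apply] at hc
  rw [hc, ← hξ a]

lemma casimir1 (θ : A →ₗ[K] K) (htr : ∀ a b : A, θ (a * b) = θ (b * a))
    (ξ₁ ξ₂ : ι → A) (hξ : ∀ a : A, a = ∑ i, θ (a * ξ₂ i) • ξ₁ i)
    (hξsym : (∑ i, ξ₁ i ⊗ₜ[K] ξ₂ i) = ∑ i, ξ₂ i ⊗ₜ[K] ξ₁ i) (a : A) :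
    (∑ i, (a * ξ₁ i) ⊗ₜ[K] ξ₂ i) = ∑ i, ξ₁ i ⊗ₜ[K] (ξ₂ i * a) := by
  have hrec2 := reconstruct2 θ ξ₁ ξ₂ hξ hξsym
  have L : (∑ i, (a * ξ₁ i) ⊗ₜ[K] ξ₂ i)
      = ∑ i, ∑ j, θ (a * ξ₁ i * ξ₂ j) • (ξ₁ j ⊗ₜ[K] ξ₂ i) := by
    refine Finset.sum_congr rfl fun i _ => ?_
    conv_lhs => rw [hξ (a * ξ₁ i)]
    rw [TensorProduct.sum_tmul]
    exact Finset.sum_congr rfl fun j _ => (TensorProduct.smul_tmul' _ _ _)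
  have R : (∑ i, ξ₁ i ⊗ₜ[K] (ξ₂ i * a))
      = ∑ i, ∑ j, θ (ξ₂ i * a * ξ₁ j) • (ξ₁ i ⊗ₜ[K] ξ₂ j) := by
    refine Finset.sum_congr rfl fun i _ => ?_
    conv_lhs => rw [hrec2 (ξ₂ i * a)]
    rw [TensorProduct.tmul_sum]
    exact Finset.sum_congr rfl fun j _ => (TensorProduct.tmul_smul _ _ _)
  rw [L, R, Finset.sum_comm]
  refine Finset.sum_congr rfl fun j _ => Finset.sum_congr rfl fun i _ => ?_
  congr 1
  rw [htr (a * ξ₁ i) (ξ₂ j), mul_assoc]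

lemma casimir2 (θ : A →ₗ[K] K) (htr : ∀ a b : A, θ (a * b) = θ (b * a))
    (ξ₁ ξ₂ : ι → A) (hξ : ∀ a : A, a = ∑ i, θ (a * ξ₂ i) • ξ₁ i)
    (hξsym : (∑ i, ξ₁ i ⊗ₜ[K] ξ₂ i) = ∑ i, ξ₂ i ⊗ₜ[K] ξ₁ i) (a : A) :
    (∑ i, (ξ₁ i * a) ⊗ₜ[K] ξ₂ i) = ∑ i, ξ₁ i ⊗ₜ[K] (a * ξ₂ i) := by
  have hrec2 := reconstruct2 θ ξ₁ ξ₂ hξ hξsym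
  have L : (∑ i, (ξ₁ i * a) ⊗ₜ[K] ξ₂ i)
      = ∑ i, ∑ j, θ (ξ₁ i * a * ξ₂ j) • (ξ₁ j ⊗ₜ[K] ξ₂ i) := by
    refine Finset.sum_congr rfl fun i _ => ?_
    conv_lhs => rw [hξ (ξ₁ i * a)]
    rw [TensorProduct.sum_tmul]
    exact Finset.sum_congr rfl fun j _ => (TensorProduct.smul_tmul' _ _ _)
  have R : (∑ i, ξ₁ i ⊗ₜ[K] (a * ξ₂ i))
      = ∑ i, ∑ j, θ (a * ξ₂ i * ξ₁ j) • (ξ₁ i ⊗ₜ[K] ξ₂ j) := by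
    refine Finset.sum_congr rfl fun i _ => ?_
    conv_lhs => rw [hrec2 (a * ξ₂ i)]
    rw [TensorProduct.tmul_sum]
    exact Finset.sum_congr rfl fun j _ => (TensorProduct.tmul_smul _ _ _)
  rw [L, R, Finset.sum_comm]
  refine Finset.sum_congr rfl fun j _ => Finset.sum_congr rfl fun i _ => ?_
  congr 1
  rw [mul_assoc (ξ₁ i), htr (ξ₁ i)]

end Aux

theorem ΔCom_maps_commSub
    [Fintype G] (ρ : G → A ≃ₐ[K] A) (u : G → G → Aˣ) (ue : Aˣ)
    (hAd : ∀ (g h : G) (x : A),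
      ρ g (ρ h x) = (↑(u g h) : A) * ρ (g * h) x * (↑((u g h)⁻¹) : A))
    (hAde : ∀ x : A, ρ (1 : G) x = (↑ue : A) * x * (↑(ue⁻¹) : A))
    (hcoc : ∀ g h k : G,
      (↑(u g h) : A) * (↑(u (g * h) k) : A) = ρ g (↑(u h k) : A) * (↑(u g (h * k)) : A))
    (hue1 : ∀ g : G, (↑(u g 1) : A) = ρ g (↑ue : A))
    (hue2 : ∀ g : G, (↑(u 1 g) : A) = (↑ue : A))
    [FiniteDimensional K A] (θ : A →ₗ[K] K)
    (htr : ∀ a b : A, θ (a * b) = θ (b * a))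
    (hnd : ∀ a : A, (∀ b : A, θ (a * b) = 0) → a = 0)
    (hGinv : ∀ (g : G) (a : A), θ (ρ g a) = θ a)
    (ξ₁ ξ₂ : ι → A)
    (hξ : ∀ a : A, a = ∑ i, θ (a * ξ₂ i) • ξ₁ i)
    (hξsym : (∑ i, ξ₁ i ⊗ₜ[K] ξ₂ i) = ∑ i, ξ₂ i ⊗ₜ[K] ξ₁ i)
    (g h : G) (c₁ c₂ : A) :
    ΔCom ρ u ξ₁ ξ₂ g h (c₁ * c₂ - c₂ * ρ (g * h) c₁) ∈
      leftTensor ρ g ⊔ rightTensor ρ h := by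
  classical
  have key2 : (∑ i, (c₂ * (↑((u g h)⁻¹) : A) * ρ g (ξ₁ i) * ρ g c₁) ⊗ₜ[K] ξ₂ i)
      = ∑ i, (c₂ * (↑((u g h)⁻¹) : A) * ρ g (ξ₁ i)) ⊗ₜ[K] (c₁ * ξ₂ i) := by
    have hc := congrArg
      (LinearMap.rTensor A ((LinearMap.mulLeft K (c₂ * (↑((u g h)⁻¹) : A))).comp
        (ρ g).toLinearMap)) (casimir2 θ htr ξ₁ ξ₂ hξ hξsym c₁)
    simpa only [map_sum, LinearMap.rTensor_tmul, LinearMap.comp_apply,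
      LinearMap.mulLeft_apply, AlgEquiv.toLinearMap_apply, map_mul, ← mul_assoc] using hc
  have hswap : c₂ * (↑((u g h)⁻¹) : A) * ρ g (ρ h c₁)
      = c₂ * ρ (g * h) c₁ * (↑((u g h)⁻¹) : A) := by
    rw [hAd g h c₁, mul_assoc c₂, mul_assoc ((u g h) : A), Units.inv_mul_cancel_left,
      ← mul_assoc]
  have key1 : (∑ i, (c₂ * ρ (g * h) c₁ * (↑((u g h)⁻¹) : A) * ρ g (ξ₁ i)) ⊗ₜ[K] ξ₂ i)
      = ∑ i, (c₂ * (↑((u g h)⁻¹) : A) * ρ g (ξ₁ i)) ⊗ₜ[K] (ξ₂ i * ρ h c₁) := by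
    have hc := congrArg
      (LinearMap.rTensor A ((LinearMap.mulLeft K (c₂ * (↑((u g h)⁻¹) : A))).comp
        (ρ g).toLinearMap)) (casimir1 θ htr ξ₁ ξ₂ hξ hξsym (ρ h c₁))
    simp only [map_sum, LinearMap.rTensor_tmul, LinearMap.comp_apply,
      LinearMap.mulLeft_apply, AlgEquiv.toLinearMap_apply, map_mul, ← mul_assoc] at hc
    rw [← hc]
    refine Finset.sum_congr rfl fun i _ => ?_
    congr 2
    rw [← hswap, mul_assoc]
  have hXmem : (∑ i, ((c₁ * (c₂ * (↑((u g h)⁻¹) : A) * ρ g (ξ₁ i))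
        - (c₂ * (↑((u g h)⁻¹) : A) * ρ g (ξ₁ i)) * ρ g c₁) ⊗ₜ[K] ξ₂ i)) ∈ leftTensor ρ g := by
    refine Submodule.sum_mem _ fun i _ => Submodule.subset_span ?_
    exact ⟨_, Submodule.subset_span ⟨c₁, _, rfl⟩, ξ₂ i, rfl⟩
  have hYmem : (∑ i, ((c₂ * (↑((u g h)⁻¹) : A) * ρ g (ξ₁ i)) ⊗ₜ[K]
        (c₁ * ξ₂ i - ξ₂ i * ρ h c₁))) ∈ rightTensor ρ h := by
    refine Submodule.sum_mem _ fun i _ => Submodule.subset_span ?_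
    exact ⟨_, _, Submodule.subset_span ⟨c₁, ξ₂ i, rfl⟩, rfl⟩
  have hEq : ΔCom ρ u ξ₁ ξ₂ g h (c₁ * c₂ - c₂ * ρ (g * h) c₁)
      = (∑ i, ((c₁ * (c₂ * (↑((u g h)⁻¹) : A) * ρ g (ξ₁ i))
          - (c₂ * (↑((u g h)⁻¹) : A) * ρ g (ξ₁ i)) * ρ g c₁) ⊗ₜ[K] ξ₂ i))
        + ∑ i, ((c₂ * (↑((u g h)⁻¹) : A) * ρ g (ξ₁ i)) ⊗ₜ[K]
          (c₁ * ξ₂ i - ξ₂ i * ρ h c₁)) := by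
    simp only [ΔCom, sub_mul, TensorProduct.sub_tmul, TensorProduct.tmul_sub,
      Finset.sum_sub_distrib, ← mul_assoc]
    rw [key2, key1]
    abel
  rw [hEq]
  exact Submodule.add_mem_sup hXmem hYmem
end
end

section
/- For any g, h, k ∈ G and any c ∈ 𝒞, the following coassociativity identity holds in 𝒞⊗𝒞⊗𝒞: (Δ_{g,h} ⊗ 1)(Δ_{gh,k}(c)) = (1 ⊗ Δ_{h,k})(Δ_{g,hk}(c)), i.e. Σ_{i,j} c c_{gh,k}⁻¹ (gh)(ξ′ᵢ) c_{g,h}⁻¹ g(ξ′ⱼ) ⊗ ξ″ⱼ ⊗ ξ″ᵢ = Σ_{i,j} c c_{g,hk}⁻¹ g(ξ′ⱼ) ⊗ ξ″ⱼ c_{h,k}⁻¹ h(ξ′ᵢ) ⊗ ξ″ᵢ. In particular, the induced comultiplication on HH₀(𝒞) is coassociative. -/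
open scoped TensorProduct

noncomputable section

variable {K : Type*} [Field K] {G : Type*} [Group G]
  {A : Type*} [Ring A] [Algebra K A] {ι : Type*} [Fintype ι]

theorem ΔCom_coassoc
    [Fintype G] (ρ : G → A ≃ₐ[K] A) (u : G → G → Aˣ) (ue : Aˣ)
    (hAd : ∀ (g h : G) (x : A),
      ρ g (ρ h x) = (↑(u g h) : A) * ρ (g * h) x * (↑((u g h)⁻¹) : A))
    (hAde : ∀ x : A, ρ (1 : G) x = (↑ue : A) * x * (↑(ue⁻¹) : A))
    (hcoc : ∀ g h k : G,
      (↑(u g h) : A) * (↑(u (g * h) k) : A) = ρ g (↑(u h k) : A) * (↑(u g (h * k)) : A))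
    (hue1 : ∀ g : G, (↑(u g 1) : A) = ρ g (↑ue : A))
    (hue2 : ∀ g : G, (↑(u 1 g) : A) = (↑ue : A))
    [FiniteDimensional K A] (θ : A →ₗ[K] K)
    (htr : ∀ a b : A, θ (a * b) = θ (b * a))
    (hnd : ∀ a : A, (∀ b : A, θ (a * b) = 0) → a = 0)
    (hGinv : ∀ (g : G) (a : A), θ (ρ g a) = θ a)
    (ξ₁ ξ₂ : ι → A)
    (hξ : ∀ a : A, a = ∑ i, θ (a * ξ₂ i) • ξ₁ i)
    (hξsym : (∑ i, ξ₁ i ⊗ₜ[K] ξ₂ i) = ∑ i, ξ₂ i ⊗ₜ[K] ξ₁ i)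
    (g h k : G) (c : A) :
    (∑ i, ∑ j,
        (c * (↑((u (g * h) k)⁻¹) : A) * ρ (g * h) (ξ₁ i) * (↑((u g h)⁻¹) : A) * ρ g (ξ₁ j))
          ⊗ₜ[K] (ξ₂ j ⊗ₜ[K] ξ₂ i) :
        A ⊗[K] (A ⊗[K] A)) =
      ∑ i, ∑ j,
        (c * (↑((u g (h * k))⁻¹) : A) * ρ g (ξ₁ j))
          ⊗ₜ[K] ((ξ₂ j * (↑((u h k)⁻¹) : A) * ρ h (ξ₁ i)) ⊗ₜ[K] ξ₂ i) := by

  classical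
  -- symmetric expansion: a = ∑ i, θ (a * ξ₁ i) • ξ₂ i
  have hS : ∀ a : A, a = ∑ i, θ (a * ξ₁ i) • ξ₂ i := by
    intro a
    have h0 := congrArg
      (TensorProduct.lift ((LinearMap.lsmul K A).comp (θ.comp (LinearMap.mulLeft K a)))) hξsym
    simp only [map_sum, TensorProduct.lift.tmul, LinearMap.coe_comp, Function.comp_apply,
      LinearMap.mulLeft_apply, LinearMap.lsmul_apply] at h0
    rw [h0]
    exact hξ a
  -- Casimir commutation
  have hB : ∀ a : A, (∑ i, (a * ξ₁ i) ⊗ₜ[K] ξ₂ i : A ⊗[K] A)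
      = ∑ i, ξ₁ i ⊗ₜ[K] (ξ₂ i * a) := by
    intro a
    have l1 : ∀ i, (a * ξ₁ i) ⊗ₜ[K] ξ₂ i
        = ∑ j, θ (a * ξ₁ i * ξ₂ j) • (ξ₁ j ⊗ₜ[K] ξ₂ i : A ⊗[K] A) := by
      intro i
      conv_lhs => rw [hξ (a * ξ₁ i)]
      rw [TensorProduct.sum_tmul]
      exact Finset.sum_congr rfl fun j _ => by rw [TensorProduct.smul_tmul']
    have l2 : ∀ i, ξ₁ i ⊗ₜ[K] (ξ₂ i * a)
        = ∑ j, θ (ξ₂ i * a * ξ₁ j) • (ξ₁ i ⊗ₜ[K] ξ₂ j : A ⊗[K] A) := by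
      intro i
      conv_lhs => rw [hS (ξ₂ i * a)]
      rw [TensorProduct.tmul_sum]
      exact Finset.sum_congr rfl fun j _ => by rw [TensorProduct.tmul_smul]
    calc (∑ i, (a * ξ₁ i) ⊗ₜ[K] ξ₂ i : A ⊗[K] A)
        = ∑ i, ∑ j, θ (a * ξ₁ i * ξ₂ j) • (ξ₁ j ⊗ₜ[K] ξ₂ i : A ⊗[K] A) :=
          Finset.sum_congr rfl fun i _ => l1 i
      _ = ∑ j, ∑ i, θ (a * ξ₁ i * ξ₂ j) • (ξ₁ j ⊗ₜ[K] ξ₂ i : A ⊗[K] A) := Finset.sum_comm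
      _ = ∑ j, ∑ i, θ (ξ₂ j * a * ξ₁ i) • (ξ₁ j ⊗ₜ[K] ξ₂ i : A ⊗[K] A) := by
          refine Finset.sum_congr rfl fun j _ => Finset.sum_congr rfl fun i _ => ?_
          rw [show θ (a * ξ₁ i * ξ₂ j) = θ (ξ₂ j * a * ξ₁ i) by
            rw [htr (a * ξ₁ i) (ξ₂ j), mul_assoc, ← mul_assoc]]
      _ = ∑ j, ξ₁ j ⊗ₜ[K] (ξ₂ j * a) := Finset.sum_congr rfl fun j _ => (l2 j).symm
  -- twisted Casimir commutation
  have hC : ∀ (g' : G) (a : A),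
      (∑ j, (ρ g' (ξ₁ j)) ⊗ₜ[K] (ξ₂ j * a) : A ⊗[K] A)
        = ∑ j, (ρ g' a * ρ g' (ξ₁ j)) ⊗ₜ[K] ξ₂ j := by
    intro g' a
    have h0 := congrArg (LinearMap.rTensor A (ρ g').toLinearMap) (hB a).symm
    simpa only [map_sum, LinearMap.rTensor_tmul, AlgEquiv.toLinearMap_apply, map_mul] using h0
  -- key cocycle identity
  have hkey : (↑((u g (h * k))⁻¹) : A) * ρ g (↑((u h k)⁻¹) : A) * (↑(u g h) : A)
      = (↑((u (g * h) k)⁻¹) : A) := by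
    have h1 : ((↑((u g (h * k))⁻¹) : A) * ρ g (↑((u h k)⁻¹) : A) * (↑(u g h) : A))
        * (↑(u (g * h) k) : A) = 1 := by
      rw [mul_assoc, hcoc g h k, ← mul_assoc, mul_assoc _ (ρ g (↑((u h k)⁻¹) : A)),
        ← map_mul, Units.inv_mul, map_one, mul_one, Units.inv_mul]
    calc (↑((u g (h * k))⁻¹) : A) * ρ g (↑((u h k)⁻¹) : A) * (↑(u g h) : A)
        = ((↑((u g (h * k))⁻¹) : A) * ρ g (↑((u h k)⁻¹) : A) * (↑(u g h) : A))
            * ((↑(u (g * h) k) : A) * (↑((u (g * h) k)⁻¹) : A)) := by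
          rw [Units.mul_inv, mul_one]
      _ = (↑((u (g * h) k)⁻¹) : A) := by rw [← mul_assoc, h1, one_mul]
  -- main computation
  refine Finset.sum_congr rfl fun i _ => ?_
  have hCi := congrArg
    (TensorProduct.map (LinearMap.mulLeft K (c * (↑((u g (h * k))⁻¹) : A)))
      ((TensorProduct.mk K A A).flip (ξ₂ i)))
    (hC g ((↑((u h k)⁻¹) : A) * ρ h (ξ₁ i)))
  simp only [map_sum, TensorProduct.map_tmul, LinearMap.mulLeft_apply, LinearMap.flip_apply,
    TensorProduct.mk_apply] at hCi
  calc (∑ j, (c * (↑((u (g * h) k)⁻¹) : A) * ρ (g * h) (ξ₁ i) * (↑((u g h)⁻¹) : A) * ρ g (ξ₁ j))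
          ⊗ₜ[K] (ξ₂ j ⊗ₜ[K] ξ₂ i) : A ⊗[K] (A ⊗[K] A))
      = ∑ j, (c * (↑((u g (h * k))⁻¹) : A)
            * (ρ g ((↑((u h k)⁻¹) : A) * ρ h (ξ₁ i)) * ρ g (ξ₁ j)))
          ⊗ₜ[K] (ξ₂ j ⊗ₜ[K] ξ₂ i) := by
        refine Finset.sum_congr rfl fun j _ => ?_
        have slot : c * (↑((u (g * h) k)⁻¹) : A) * ρ (g * h) (ξ₁ i) * (↑((u g h)⁻¹) : A)
              * ρ g (ξ₁ j)
            = c * (↑((u g (h * k))⁻¹) : A)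
              * (ρ g ((↑((u h k)⁻¹) : A) * ρ h (ξ₁ i)) * ρ g (ξ₁ j)) := by
          rw [map_mul, hAd g h (ξ₁ i), ← hkey]
          simp only [mul_assoc]
        rw [slot]
    _ = ∑ j, (c * (↑((u g (h * k))⁻¹) : A) * ρ g (ξ₁ j))
          ⊗ₜ[K] ((ξ₂ j * ((↑((u h k)⁻¹) : A) * ρ h (ξ₁ i))) ⊗ₜ[K] ξ₂ i) := hCi.symm
    _ = ∑ j, (c * (↑((u g (h * k))⁻¹) : A) * ρ g (ξ₁ j))
          ⊗ₜ[K] ((ξ₂ j * (↑((u h k)⁻¹) : A) * ρ h (ξ₁ i)) ⊗ₜ[K] ξ₂ i) := by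
        refine Finset.sum_congr rfl fun j _ => ?_
        simp only [mul_assoc]
end
end

section
/- The functional θ_e(c) = θ(c c_e) is invariant under the twisted G-action: for any g ∈ G and any c ∈ 𝒞, θ(T_e(g)(c) · c_e) = θ(c c_e), where T_e(g)(c) = c_e⁻¹ c_{g,g⁻¹}⁻¹ g(c) c_{g,e} c_{g,g⁻¹}. -/
open scoped TensorProduct

noncomputable section

variable {K : Type*} [Field K] {G : Type*} [Group G]
  {A : Type*} [Ring A] [Algebra K A] {ι : Type*} [Fintype ι]

theorem θe_G_invariant
    [Fintype G] (ρ : G → A ≃ₐ[K] A) (u : G → G → Aˣ) (ue : Aˣ)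
    (hAd : ∀ (g h : G) (x : A),
      ρ g (ρ h x) = (↑(u g h) : A) * ρ (g * h) x * (↑((u g h)⁻¹) : A))
    (hAde : ∀ x : A, ρ (1 : G) x = (↑ue : A) * x * (↑(ue⁻¹) : A))
    (hcoc : ∀ g h k : G,
      (↑(u g h) : A) * (↑(u (g * h) k) : A) = ρ g (↑(u h k) : A) * (↑(u g (h * k)) : A))
    (hue1 : ∀ g : G, (↑(u g 1) : A) = ρ g (↑ue : A))
    (hue2 : ∀ g : G, (↑(u 1 g) : A) = (↑ue : A))
    [FiniteDimensional K A] (θ : A →ₗ[K] K)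
    (htr : ∀ a b : A, θ (a * b) = θ (b * a))
    (hnd : ∀ a : A, (∀ b : A, θ (a * b) = 0) → a = 0)
    (hGinv : ∀ (g : G) (a : A), θ (ρ g a) = θ a)
    (ξ₁ ξ₂ : ι → A)
    (hξ : ∀ a : A, a = ∑ i, θ (a * ξ₂ i) • ξ₁ i)
    (hξsym : (∑ i, ξ₁ i ⊗ₜ[K] ξ₂ i) = ∑ i, ξ₂ i ⊗ₜ[K] ξ₁ i)
    (g : G) (c : A) :
    θ (((↑(ue⁻¹) : A) * (↑((u g g⁻¹)⁻¹) : A) * ρ g c * (↑(u g 1) : A) * (↑(u g g⁻¹) : A)) *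
        (↑ue : A)) =
      θ (c * (↑ue : A)) := by
  have h1 : ((↑(ue⁻¹) : A) * (↑((u g g⁻¹)⁻¹) : A) * ρ g c * (↑(u g 1) : A) *
      (↑(u g g⁻¹) : A)) * (↑ue : A)
      = ((↑(ue⁻¹) : A) * (↑((u g g⁻¹)⁻¹) : A)) *
        (ρ g (c * (↑ue : A)) * ((↑(u g g⁻¹) : A) * (↑ue : A))) := by
    rw [hue1, map_mul]; noncomm_ring
  rw [h1, htr]
  have h2 : ρ g (c * (↑ue : A)) * ((↑(u g g⁻¹) : A) * (↑ue : A)) *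
      ((↑(ue⁻¹) : A) * (↑((u g g⁻¹)⁻¹) : A)) = ρ g (c * (↑ue : A)) := by
    simp [mul_assoc]
  rw [h2, hGinv]
end
end

section
/- The symmetric tensor ξ inverse to the Frobenius pairing satisfies the following twisted G-invariance: for any g ∈ G, Σᵢ ξ′ᵢ ⊗ g⁻¹(ξ″ᵢ) = Σᵢ (c_e⁻¹ c_{g,g⁻¹}⁻¹ g(ξ′ᵢ) c_{g,g⁻¹} c_e) ⊗ ξ″ᵢ in 𝒞⊗𝒞. -/
open scoped TensorProduct

noncomputable section

variable {K : Type*} [Field K] {G : Type*} [Group G]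
  {A : Type*} [Ring A] [Algebra K A] {ι : Type*} [Fintype ι]

theorem ξ_twisted_G_invariance
    [Fintype G] (ρ : G → A ≃ₐ[K] A) (u : G → G → Aˣ) (ue : Aˣ)
    (hAd : ∀ (g h : G) (x : A),
      ρ g (ρ h x) = (↑(u g h) : A) * ρ (g * h) x * (↑((u g h)⁻¹) : A))
    (hAde : ∀ x : A, ρ (1 : G) x = (↑ue : A) * x * (↑(ue⁻¹) : A))
    (hcoc : ∀ g h k : G,
      (↑(u g h) : A) * (↑(u (g * h) k) : A) = ρ g (↑(u h k) : A) * (↑(u g (h * k)) : A))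
    (hue1 : ∀ g : G, (↑(u g 1) : A) = ρ g (↑ue : A))
    (hue2 : ∀ g : G, (↑(u 1 g) : A) = (↑ue : A))
    [FiniteDimensional K A] (θ : A →ₗ[K] K)
    (htr : ∀ a b : A, θ (a * b) = θ (b * a))
    (hnd : ∀ a : A, (∀ b : A, θ (a * b) = 0) → a = 0)
    (hGinv : ∀ (g : G) (a : A), θ (ρ g a) = θ a)
    (ξ₁ ξ₂ : ι → A)
    (hξ : ∀ a : A, a = ∑ i, θ (a * ξ₂ i) • ξ₁ i)
    (hξsym : (∑ i, ξ₁ i ⊗ₜ[K] ξ₂ i) = ∑ i, ξ₂ i ⊗ₜ[K] ξ₁ i)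
    (g : G) :
    (∑ i, ξ₁ i ⊗ₜ[K] ρ g⁻¹ (ξ₂ i)) =
      ∑ i, ((↑(ue⁻¹) : A) * (↑((u g g⁻¹)⁻¹) : A) * ρ g (ξ₁ i) * (↑(u g g⁻¹) : A) * (↑ue : A))
        ⊗ₜ[K] ξ₂ i := by

  classical
  -- abbreviations
  set w : Aˣ := u g g⁻¹ with hwdef
  -- second dual-basis expansion, from symmetry of ξ
  have hξ' : ∀ a : A, a = ∑ i, θ (a * ξ₁ i) • ξ₂ i := by
    intro a
    have hmap := congrArg (TensorProduct.lift
      (LinearMap.mk₂ K (fun x y : A => θ (a * x) • y)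
        (fun m m' n => by simp [mul_add, add_smul])
        (fun c m n => by simp [mul_smul_comm, smul_smul])
        (fun m n n' => by simp [smul_add])
        (fun c m n => by rw [smul_comm]))) hξsym
    simp only [map_sum, TensorProduct.lift.tmul, LinearMap.mk₂_apply] at hmap
    rw [hmap]
    exact hξ a
  -- the adjoint identity
  have key : ∀ i j, θ (ρ g⁻¹ (ξ₂ i) * ξ₁ j)
      = θ (((↑(ue⁻¹) : A) * (↑(w⁻¹) : A) * ρ g (ξ₁ j) * (↑w : A) * (↑ue : A)) * ξ₂ i) := by
    intro i j
    have h1 : ρ g (ρ g⁻¹ (ξ₂ i))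
        = (↑w : A) * ((↑ue : A) * ξ₂ i * (↑(ue⁻¹) : A)) * (↑(w⁻¹) : A) := by
      rw [hAd, mul_inv_cancel, hAde]
    calc θ (ρ g⁻¹ (ξ₂ i) * ξ₁ j)
        = θ (ξ₁ j * ρ g⁻¹ (ξ₂ i)) := htr _ _
      _ = θ (ρ g (ξ₁ j * ρ g⁻¹ (ξ₂ i))) := (hGinv g _).symm
      _ = θ (ρ g (ξ₁ j) * ρ g (ρ g⁻¹ (ξ₂ i))) := by rw [map_mul]
      _ = θ ((ρ g (ξ₁ j) * (↑w : A) * (↑ue : A) * ξ₂ i) * ((↑(ue⁻¹) : A) * (↑(w⁻¹) : A))) := by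
          rw [h1]; congr 1; noncomm_ring
      _ = θ (((↑(ue⁻¹) : A) * (↑(w⁻¹) : A)) * (ρ g (ξ₁ j) * (↑w : A) * (↑ue : A) * ξ₂ i)) :=
          htr _ _
      _ = θ (((↑(ue⁻¹) : A) * (↑(w⁻¹) : A) * ρ g (ξ₁ j) * (↑w : A) * (↑ue : A)) * ξ₂ i) := by
          congr 1; noncomm_ring
  calc (∑ i, ξ₁ i ⊗ₜ[K] ρ g⁻¹ (ξ₂ i))
      = ∑ i, ξ₁ i ⊗ₜ[K] (∑ j, θ (ρ g⁻¹ (ξ₂ i) * ξ₁ j) • ξ₂ j) :=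
        Finset.sum_congr rfl fun i _ => by rw [← hξ' (ρ g⁻¹ (ξ₂ i))]
    _ = ∑ i, ∑ j, θ (ρ g⁻¹ (ξ₂ i) * ξ₁ j) • (ξ₁ i ⊗ₜ[K] ξ₂ j) := by
        simp [TensorProduct.tmul_sum, TensorProduct.tmul_smul]
    _ = ∑ j, ∑ i, θ (((↑(ue⁻¹) : A) * (↑(w⁻¹) : A) * ρ g (ξ₁ j) * (↑w : A) * (↑ue : A)) * ξ₂ i)
          • (ξ₁ i ⊗ₜ[K] ξ₂ j) := by
        rw [Finset.sum_comm]
        exact Finset.sum_congr rfl fun j _ => Finset.sum_congr rfl fun i _ => by rw [key i j]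
    _ = ∑ j, (∑ i, θ (((↑(ue⁻¹) : A) * (↑(w⁻¹) : A) * ρ g (ξ₁ j) * (↑w : A) * (↑ue : A)) * ξ₂ i)
          • ξ₁ i) ⊗ₜ[K] ξ₂ j := by
        simp [TensorProduct.sum_tmul, TensorProduct.smul_tmul']
    _ = ∑ j, ((↑(ue⁻¹) : A) * (↑(w⁻¹) : A) * ρ g (ξ₁ j) * (↑w : A) * (↑ue : A)) ⊗ₜ[K] ξ₂ j :=
        Finset.sum_congr rfl fun j _ => by rw [← hξ]
end
end

section
/- The counit property holds: for any g ∈ G and any c ∈ 𝒞, one has (θ_e ⊗ 1)(Δ_{e,g}(c)) = c and (1 ⊗ θ_e)(Δ_{g,e}(c)) = c in 𝒞, where θ_e(x) = θ(x c_e); explicitly, Σᵢ θ(c c_{e,g}⁻¹ e(ξ′ᵢ) c_e) ξ″ᵢ = c and Σᵢ c c_{g,e}⁻¹ g(ξ′ᵢ) θ(ξ″ᵢ c_e) = c. -/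
open scoped TensorProduct

noncomputable section

variable {K : Type*} [Field K] {G : Type*} [Group G]
  {A : Type*} [Ring A] [Algebra K A] {ι : Type*} [Fintype ι]

theorem ΔCom_counit
    [Fintype G] (ρ : G → A ≃ₐ[K] A) (u : G → G → Aˣ) (ue : Aˣ)
    (hAd : ∀ (g h : G) (x : A),
      ρ g (ρ h x) = (↑(u g h) : A) * ρ (g * h) x * (↑((u g h)⁻¹) : A))
    (hAde : ∀ x : A, ρ (1 : G) x = (↑ue : A) * x * (↑(ue⁻¹) : A))
    (hcoc : ∀ g h k : G,
      (↑(u g h) : A) * (↑(u (g * h) k) : A) = ρ g (↑(u h k) : A) * (↑(u g (h * k)) : A))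
    (hue1 : ∀ g : G, (↑(u g 1) : A) = ρ g (↑ue : A))
    (hue2 : ∀ g : G, (↑(u 1 g) : A) = (↑ue : A))
    [FiniteDimensional K A] (θ : A →ₗ[K] K)
    (htr : ∀ a b : A, θ (a * b) = θ (b * a))
    (hnd : ∀ a : A, (∀ b : A, θ (a * b) = 0) → a = 0)
    (hGinv : ∀ (g : G) (a : A), θ (ρ g a) = θ a)
    (ξ₁ ξ₂ : ι → A)
    (hξ : ∀ a : A, a = ∑ i, θ (a * ξ₂ i) • ξ₁ i)
    (hξsym : (∑ i, ξ₁ i ⊗ₜ[K] ξ₂ i) = ∑ i, ξ₂ i ⊗ₜ[K] ξ₁ i)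
    (g : G) (c : A) :
    (∑ i, θ (c * (↑((u 1 g)⁻¹) : A) * ρ (1 : G) (ξ₁ i) * (↑ue : A)) • ξ₂ i = c) ∧
      (∑ i, θ (ξ₂ i * (↑ue : A)) • (c * (↑((u g 1)⁻¹) : A) * ρ g (ξ₁ i)) = c) := by
  have key : ∀ a : A, ∑ i, θ (a * ξ₁ i) • ξ₂ i = a := by
    intro a
    have h := congrArg
      (TensorProduct.lift ((LinearMap.lsmul K A).comp (θ.comp (LinearMap.mulLeft K a)))) hξsym
    simp only [map_sum, TensorProduct.lift.tmul, LinearMap.comp_apply,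
      LinearMap.lsmul_apply, LinearMap.mulLeft_apply] at h
    rw [h, ← hξ a]
  constructor
  · have h1 : ((u 1 g)⁻¹ : Aˣ) = ue⁻¹ := by
      have : u 1 g = ue := Units.ext (hue2 g)
      rw [this]
    have hx : ∀ x : A,
        c * (↑(ue⁻¹) : A) * ((↑ue : A) * x * (↑(ue⁻¹) : A)) * (↑ue : A) = c * x := by
      intro x
      simp [mul_assoc]
    simp only [h1, hAde, hx]
    exact key c
  · have hmul : ρ g (↑(ue⁻¹) : A) * (↑(u g 1) : A) = 1 := by
      rw [hue1, ← map_mul]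
      simp
    have h2 : (↑((u g 1)⁻¹) : A) = ρ g (↑(ue⁻¹) : A) := by
      calc (↑((u g 1)⁻¹) : A)
          = ρ g (↑(ue⁻¹) : A) * (↑(u g 1) : A) * (↑((u g 1)⁻¹) : A) := by
            rw [hmul, one_mul]
        _ = ρ g (↑(ue⁻¹) : A) := by rw [mul_assoc, Units.mul_inv, mul_one]
    have hterm : ∀ i, θ (ξ₂ i * (↑ue : A)) • (c * (↑((u g 1)⁻¹) : A) * ρ g (ξ₁ i))
        = c * ρ g (θ ((↑ue : A) * ξ₂ i) • ((↑(ue⁻¹) : A) * ξ₁ i)) := by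
      intro i
      rw [h2, htr (ξ₂ i) (↑ue : A)]
      simp only [map_smul, map_mul, mul_smul_comm, mul_assoc]
    rw [Finset.sum_congr rfl fun i _ => hterm i, ← Finset.mul_sum, ← map_sum]
    have hinner : ∑ i, θ ((↑ue : A) * ξ₂ i) • ((↑(ue⁻¹) : A) * ξ₁ i) = 1 := by
      simp_rw [← mul_smul_comm]
      rw [← Finset.mul_sum, ← hξ (↑ue : A), Units.inv_mul]
    rw [hinner, map_one, mul_one]
end
end

section
/- The comultiplication is a morphism of left modules over the twisted multiplication: for any g, h, k ∈ G and any c′, c″ ∈ 𝒞, the identity Δ_{gh,k}(m_{g,hk}(c′ ⊗ c″)) = (m_{g,h} ⊗ 1)(c′ ⊗ Δ_{h,k}(c″)) holds in 𝒞⊗𝒞. -/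
open scoped TensorProduct

noncomputable section

variable {K : Type*} [Field K] {G : Type*} [Group G]
  {A : Type*} [Ring A] [Algebra K A] {ι : Type*} [Fintype ι]

theorem ΔCom_left_module_morphism
    [Fintype G] (ρ : G → A ≃ₐ[K] A) (u : G → G → Aˣ) (ue : Aˣ)
    (hAd : ∀ (g h : G) (x : A),
      ρ g (ρ h x) = (↑(u g h) : A) * ρ (g * h) x * (↑((u g h)⁻¹) : A))
    (hAde : ∀ x : A, ρ (1 : G) x = (↑ue : A) * x * (↑(ue⁻¹) : A))
    (hcoc : ∀ g h k : G,
      (↑(u g h) : A) * (↑(u (g * h) k) : A) = ρ g (↑(u h k) : A) * (↑(u g (h * k)) : A))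
    (hue1 : ∀ g : G, (↑(u g 1) : A) = ρ g (↑ue : A))
    (hue2 : ∀ g : G, (↑(u 1 g) : A) = (↑ue : A))
    [FiniteDimensional K A] (θ : A →ₗ[K] K)
    (htr : ∀ a b : A, θ (a * b) = θ (b * a))
    (hnd : ∀ a : A, (∀ b : A, θ (a * b) = 0) → a = 0)
    (hGinv : ∀ (g : G) (a : A), θ (ρ g a) = θ a)
    (ξ₁ ξ₂ : ι → A)
    (hξ : ∀ a : A, a = ∑ i, θ (a * ξ₂ i) • ξ₁ i)
    (hξsym : (∑ i, ξ₁ i ⊗ₜ[K] ξ₂ i) = ∑ i, ξ₂ i ⊗ₜ[K] ξ₁ i)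
    (g h k : G) (c' c'' : A) :
    ΔCom ρ u ξ₁ ξ₂ (g * h) k (mMul ρ u ξ₁ ξ₂ g (h * k) c' c'') =
      ∑ j, mMul ρ u ξ₁ ξ₂ g h c' (c'' * (↑((u h k)⁻¹) : A) * ρ h (ξ₁ j)) ⊗ₜ[K] ξ₂ j := by
  unfold ΔCom mMul
  refine Finset.sum_congr rfl fun j _ => ?_
  congr 1
  rw [Finset.sum_mul, Finset.sum_mul]
  refine Finset.sum_congr rfl fun i _ => ?_
  have key : (↑(u g (h * k)) : A) * (↑((u (g * h) k)⁻¹) : A) =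
      ρ g (↑((u h k)⁻¹) : A) * (↑(u g h) : A) := by
    have h2 : ρ g (↑((u h k)⁻¹) : A) * ρ g (↑(u h k) : A) = 1 := by
      rw [← map_mul, Units.inv_mul, map_one]
    have h3 : ρ g (↑((u h k)⁻¹) : A) * (↑(u g h) : A) * (↑(u (g * h) k) : A) =
        (↑(u g (h * k)) : A) := by
      rw [mul_assoc, hcoc g h k, ← mul_assoc, h2, one_mul]
    rw [← h3, mul_assoc, Units.mul_inv, mul_one]
  have key2 : (↑(u g h) : A) * ρ (g * h) (ξ₁ j) = ρ g (ρ h (ξ₁ j)) * (↑(u g h) : A) := by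
    rw [hAd g h (ξ₁ j), mul_assoc, Units.inv_mul, mul_one]
  simp only [map_mul, mul_assoc]
  rw [← mul_assoc (↑(u g (h * k)) : A), key, mul_assoc, key2]
end
end

section
/- Suppose the central element z = Σᵢ ξ′ᵢ ξ″ᵢ is invertible in 𝒞 (e.g. when 𝒞 is separable). Then the class of (z c_e)⁻¹ is a two-sided unit for the multiplication on HH₀(𝒞): for every g ∈ G and c ∈ 𝒞, m_{e,g}((z c_e)⁻¹ ⊗ c) = c holds in 𝒞, and m_{g,e}(c ⊗ (z c_e)⁻¹) is congruent to c modulo the subspace 𝒞_g. -/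
open scoped TensorProduct

noncomputable section

variable {K : Type*} [Field K] {G : Type*} [Group G]
  {A : Type*} [Ring A] [Algebra K A] {ι : Type*} [Fintype ι]

theorem unit_of_separable
    [Fintype G] (ρ : G → A ≃ₐ[K] A) (u : G → G → Aˣ) (ue : Aˣ)
    (hAd : ∀ (g h : G) (x : A),
      ρ g (ρ h x) = (↑(u g h) : A) * ρ (g * h) x * (↑((u g h)⁻¹) : A))
    (hAde : ∀ x : A, ρ (1 : G) x = (↑ue : A) * x * (↑(ue⁻¹) : A))
    (hcoc : ∀ g h k : G,
      (↑(u g h) : A) * (↑(u (g * h) k) : A) = ρ g (↑(u h k) : A) * (↑(u g (h * k)) : A))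
    (hue1 : ∀ g : G, (↑(u g 1) : A) = ρ g (↑ue : A))
    (hue2 : ∀ g : G, (↑(u 1 g) : A) = (↑ue : A))
    [FiniteDimensional K A] (θ : A →ₗ[K] K)
    (htr : ∀ a b : A, θ (a * b) = θ (b * a))
    (hnd : ∀ a : A, (∀ b : A, θ (a * b) = 0) → a = 0)
    (hGinv : ∀ (g : G) (a : A), θ (ρ g a) = θ a)
    (ξ₁ ξ₂ : ι → A)
    (hξ : ∀ a : A, a = ∑ i, θ (a * ξ₂ i) • ξ₁ i)
    (hξsym : (∑ i, ξ₁ i ⊗ₜ[K] ξ₂ i) = ∑ i, ξ₂ i ⊗ₜ[K] ξ₁ i)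
    (w : Aˣ) (hw : (↑w : A) = (∑ i, ξ₁ i * ξ₂ i) * (↑ue : A)) (g : G) (c : A) :
    mMul ρ u ξ₁ ξ₂ (1 : G) g (↑(w⁻¹) : A) c = c ∧
      mMul ρ u ξ₁ ξ₂ g (1 : G) c (↑(w⁻¹) : A) - c ∈ commSub ρ g := by
  classical
  -- second dual-basis expansion
  have hξ' : ∀ a : A, a = ∑ i, θ (a * ξ₁ i) • ξ₂ i := by
    intro a
    have hmap := congrArg
      (TensorProduct.lift ((LinearMap.lsmul K A).comp (θ.comp (LinearMap.mulLeft K a)))) hξsym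
    simp only [map_sum, TensorProduct.lift.tmul, LinearMap.comp_apply,
      LinearMap.mulLeft_apply, LinearMap.lsmul_apply] at hmap
    rw [hmap]
    exact hξ a
  have hmulsym : (∑ i, ξ₁ i * ξ₂ i) = ∑ i, ξ₂ i * ξ₁ i := by
    have hmap := congrArg (LinearMap.mul' K A) hξsym
    simpa only [map_sum, LinearMap.mul'_apply] using hmap
  -- Casimir-type commutation lemma
  have hL : ∀ a b : A, (∑ i, a * ξ₁ i * b * ξ₂ i) = ∑ i, ξ₁ i * b * ξ₂ i * a := by
    intro a b
    have e1 : ∀ i, a * ξ₁ i * b * ξ₂ i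
        = ∑ j, θ (ξ₂ j * (a * ξ₁ i)) • (ξ₁ j * b * ξ₂ i) := by
      intro i
      calc a * ξ₁ i * b * ξ₂ i = (a * ξ₁ i) * (b * ξ₂ i) := by noncomm_ring
        _ = (∑ j, θ ((a * ξ₁ i) * ξ₂ j) • ξ₁ j) * (b * ξ₂ i) := by rw [← hξ (a * ξ₁ i)]
        _ = ∑ j, θ ((a * ξ₁ i) * ξ₂ j) • (ξ₁ j * b * ξ₂ i) := by
            rw [Finset.sum_mul]
            exact Finset.sum_congr rfl fun j _ => by
              rw [smul_mul_assoc, ← mul_assoc]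
        _ = ∑ j, θ (ξ₂ j * (a * ξ₁ i)) • (ξ₁ j * b * ξ₂ i) :=
            Finset.sum_congr rfl fun j _ => by rw [htr]
    have e2 : ∀ i, ξ₁ i * b * ξ₂ i * a
        = ∑ j, θ (ξ₂ i * (a * ξ₁ j)) • (ξ₁ i * b * ξ₂ j) := by
      intro i
      calc ξ₁ i * b * ξ₂ i * a = (ξ₁ i * b) * (ξ₂ i * a) := by noncomm_ring
        _ = (ξ₁ i * b) * (∑ j, θ ((ξ₂ i * a) * ξ₁ j) • ξ₂ j) := by rw [← hξ' (ξ₂ i * a)]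
        _ = ∑ j, θ ((ξ₂ i * a) * ξ₁ j) • (ξ₁ i * b * ξ₂ j) := by
            rw [Finset.mul_sum]
            exact Finset.sum_congr rfl fun j _ => by rw [mul_smul_comm]
        _ = ∑ j, θ (ξ₂ i * (a * ξ₁ j)) • (ξ₁ i * b * ξ₂ j) :=
            Finset.sum_congr rfl fun j _ => by rw [mul_assoc]
    calc (∑ i, a * ξ₁ i * b * ξ₂ i)
        = ∑ i, ∑ j, θ (ξ₂ j * (a * ξ₁ i)) • (ξ₁ j * b * ξ₂ i) :=
          Finset.sum_congr rfl fun i _ => e1 i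
      _ = ∑ j, ∑ i, θ (ξ₂ j * (a * ξ₁ i)) • (ξ₁ j * b * ξ₂ i) := Finset.sum_comm
      _ = ∑ j, ξ₁ j * b * ξ₂ j * a := Finset.sum_congr rfl fun j _ => (e2 j).symm
  set z : A := ∑ i, ξ₁ i * ξ₂ i with hzdef
  set zi : A := ↑ue * ↑w⁻¹ with hzidef
  have hzc : ∀ a : A, a * z = z * a := by
    intro a
    have h := hL a 1
    simp only [mul_one] at h
    calc a * z = ∑ i, a * ξ₁ i * ξ₂ i := by
          rw [hzdef, Finset.mul_sum]
          exact Finset.sum_congr rfl fun i _ => (mul_assoc a _ _).symm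
      _ = ∑ i, ξ₁ i * ξ₂ i * a := h
      _ = z * a := by rw [hzdef, Finset.sum_mul]
  have hzzi : z * zi = 1 := by
    rw [hzidef, ← mul_assoc, ← hw, Units.mul_inv]
  have hziz : zi * z = 1 := (hzc zi).trans hzzi
  have hzic : ∀ a : A, a * zi = zi * a := by
    intro a
    calc a * zi = ((zi * z) * a) * zi := by rw [hziz, one_mul]
      _ = (zi * (a * z)) * zi := by rw [mul_assoc zi z a, ← hzc]
      _ = ((zi * a) * z) * zi := by rw [← mul_assoc zi a z]
      _ = (zi * a) * (z * zi) := by rw [mul_assoc]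
      _ = zi * a := by rw [hzzi, mul_one]
  have hwinv : (↑w⁻¹ : A) = ↑ue⁻¹ * zi := by
    rw [hzidef, ← mul_assoc, Units.inv_mul, one_mul]
  have hwue : (↑w⁻¹ : A) * ↑ue = zi := by
    rw [hwinv, mul_assoc, ← hzic, ← mul_assoc, Units.inv_mul, one_mul]
  have hMzi : (∑ i, ξ₁ i * zi * ξ₂ i) = 1 := by
    calc (∑ i, ξ₁ i * zi * ξ₂ i) = ∑ i, zi * (ξ₁ i * ξ₂ i) :=
          Finset.sum_congr rfl fun i _ => by rw [hzic, mul_assoc]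
      _ = zi * z := by rw [hzdef, ← Finset.mul_sum]
      _ = 1 := hziz
  -- part 1
  have part1 : mMul ρ u ξ₁ ξ₂ (1 : G) g (↑(w⁻¹) : A) c = c := by
    have hterm : ∀ i : ι, ξ₁ i * ↑w⁻¹ * ρ 1 (ξ₂ i * c) * ↑(u 1 g) = ξ₁ i * zi * ξ₂ i * c := by
      intro i
      rw [hAde, hue2]
      calc ξ₁ i * ↑w⁻¹ * (↑ue * (ξ₂ i * c) * ↑ue⁻¹) * ↑ue
          = ξ₁ i * (↑w⁻¹ * ↑ue) * ξ₂ i * c * (↑ue⁻¹ * ↑ue) := by noncomm_ring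
        _ = ξ₁ i * zi * ξ₂ i * c := by rw [hwue, Units.inv_mul, mul_one]
    calc mMul ρ u ξ₁ ξ₂ (1 : G) g (↑(w⁻¹) : A) c
        = ∑ i, ξ₁ i * ↑w⁻¹ * ρ 1 (ξ₂ i * c) * ↑(u 1 g) := rfl
      _ = ∑ i, ξ₁ i * zi * ξ₂ i * c := Finset.sum_congr rfl fun i _ => hterm i
      _ = (∑ i, ξ₁ i * zi * ξ₂ i) * c := (Finset.sum_mul _ _ _).symm
      _ = c := by rw [hMzi, one_mul]
  -- expansion with respect to the transported dual basis
  have hη' : ∀ a : A, a = ∑ j, θ (a * ρ g (ξ₁ j)) • ρ g (ξ₂ j) := by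
    intro a
    have hco : ∀ j, θ ((ρ g).symm a * ξ₁ j) = θ (a * ρ g (ξ₁ j)) := fun j => by
      rw [← hGinv g ((ρ g).symm a * ξ₁ j), map_mul, AlgEquiv.apply_symm_apply]
    calc a = ρ g ((ρ g).symm a) := (AlgEquiv.apply_symm_apply _ _).symm
      _ = ρ g (∑ j, θ ((ρ g).symm a * ξ₁ j) • ξ₂ j) := by rw [← hξ']
      _ = ∑ j, θ ((ρ g).symm a * ξ₁ j) • ρ g (ξ₂ j) := by
          rw [map_sum]
          exact Finset.sum_congr rfl fun j _ => map_smul (ρ g) _ _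
      _ = ∑ j, θ (a * ρ g (ξ₁ j)) • ρ g (ξ₂ j) :=
          Finset.sum_congr rfl fun j _ => by rw [hco]
  have hρz : ρ g z = z := by
    calc ρ g z = ∑ j, ρ g (ξ₁ j) * ρ g (ξ₂ j) := by
          rw [hzdef, map_sum]
          exact Finset.sum_congr rfl fun j _ => map_mul _ _ _
      _ = ∑ j, (∑ i, θ (ρ g (ξ₁ j) * ξ₂ i) • ξ₁ i) * ρ g (ξ₂ j) :=
          Finset.sum_congr rfl fun j _ => by rw [← hξ (ρ g (ξ₁ j))]
      _ = ∑ j, ∑ i, θ (ξ₂ i * ρ g (ξ₁ j)) • (ξ₁ i * ρ g (ξ₂ j)) := by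
          refine Finset.sum_congr rfl fun j _ => ?_
          rw [Finset.sum_mul]
          exact Finset.sum_congr rfl fun i _ => by rw [smul_mul_assoc, htr]
      _ = ∑ i, ∑ j, θ (ξ₂ i * ρ g (ξ₁ j)) • (ξ₁ i * ρ g (ξ₂ j)) := Finset.sum_comm
      _ = ∑ i, ξ₁ i * (∑ j, θ (ξ₂ i * ρ g (ξ₁ j)) • ρ g (ξ₂ j)) := by
          refine Finset.sum_congr rfl fun i _ => ?_
          rw [Finset.mul_sum]
          exact Finset.sum_congr rfl fun j _ => (mul_smul_comm _ _ _).symm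
      _ = ∑ i, ξ₁ i * ξ₂ i := Finset.sum_congr rfl fun i _ => by rw [← hη' (ξ₂ i)]
      _ = z := hzdef.symm
  have hρzi : ρ g zi = zi := by
    have h1 : ρ g zi * z = 1 := by rw [← hρz, ← map_mul, hziz, map_one]
    calc ρ g zi = ρ g zi * (z * zi) := by rw [hzzi, mul_one]
      _ = (ρ g zi * z) * zi := (mul_assoc _ _ _).symm
      _ = zi := by rw [h1, one_mul]
  -- commSub is stable under multiplication by zi
  have hclos : ∀ x ∈ commSub ρ g, zi * x ∈ commSub ρ g := by
    intro x hx
    refine Submodule.span_induction (p := fun x _ => zi * x ∈ commSub ρ g)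
      ?_ ?_ ?_ ?_ hx
    · rintro x ⟨c₁, c₂, rfl⟩
      have : zi * (c₁ * c₂ - c₂ * ρ g c₁) = (zi * c₁) * c₂ - c₂ * ρ g (zi * c₁) := by
        rw [map_mul, hρzi, mul_sub, ← mul_assoc]
        congr 1
        calc zi * (c₂ * ρ g c₁) = (zi * c₂) * ρ g c₁ := (mul_assoc _ _ _).symm
          _ = (c₂ * zi) * ρ g c₁ := by rw [hzic]
          _ = c₂ * (zi * ρ g c₁) := mul_assoc _ _ _
      rw [this]
      exact Submodule.subset_span ⟨zi * c₁, c₂, rfl⟩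
    · simp
    · intro x y _ _ hx hy
      rw [mul_add]
      exact Submodule.add_mem _ hx hy
    · intro a x _ hx
      rw [mul_smul_comm]
      exact Submodule.smul_mem _ _ hx
  have hS : z * c - (∑ i, ξ₁ i * c * ρ g (ξ₂ i)) ∈ commSub ρ g := by
    have heq : z * c - (∑ i, ξ₁ i * c * ρ g (ξ₂ i))
        = ∑ i, (ξ₂ i * (ξ₁ i * c) - (ξ₁ i * c) * ρ g (ξ₂ i)) := by
      have h1 : z * c = ∑ i, ξ₂ i * (ξ₁ i * c) := by
        rw [hmulsym, Finset.sum_mul]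
        exact Finset.sum_congr rfl fun i _ => mul_assoc _ _ _
      rw [h1, ← Finset.sum_sub_distrib]
    rw [heq]
    exact Submodule.sum_mem _ fun i _ => Submodule.subset_span ⟨ξ₂ i, ξ₁ i * c, rfl⟩
  have part2exp : mMul ρ u ξ₁ ξ₂ g (1 : G) c (↑(w⁻¹) : A)
      = zi * ∑ i, ξ₁ i * c * ρ g (ξ₂ i) := by
    have hterm : ∀ i : ι, ξ₁ i * c * ρ g (ξ₂ i * ↑w⁻¹) * ↑(u g 1)
        = ξ₁ i * c * ρ g (ξ₂ i) * zi := by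
      intro i
      rw [hue1, map_mul]
      calc ξ₁ i * c * (ρ g (ξ₂ i) * ρ g (↑w⁻¹)) * ρ g (↑ue)
          = ξ₁ i * c * ρ g (ξ₂ i) * (ρ g (↑w⁻¹) * ρ g (↑ue)) := by noncomm_ring
        _ = ξ₁ i * c * ρ g (ξ₂ i) * zi := by rw [← map_mul, hwue, hρzi]
    calc mMul ρ u ξ₁ ξ₂ g (1 : G) c (↑(w⁻¹) : A)
        = ∑ i, ξ₁ i * c * ρ g (ξ₂ i * ↑w⁻¹) * ↑(u g 1) := rfl
      _ = ∑ i, ξ₁ i * c * ρ g (ξ₂ i) * zi := Finset.sum_congr rfl fun i _ => hterm i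
      _ = (∑ i, ξ₁ i * c * ρ g (ξ₂ i)) * zi := (Finset.sum_mul _ _ _).symm
      _ = zi * ∑ i, ξ₁ i * c * ρ g (ξ₂ i) := hzic _
  refine ⟨part1, ?_⟩
  rw [part2exp]
  have key := hclos _ hS
  have hrw : zi * (∑ i, ξ₁ i * c * ρ g (ξ₂ i)) - c
      = -(zi * (z * c - ∑ i, ξ₁ i * c * ρ g (ξ₂ i))) := by
    rw [mul_sub, ← mul_assoc, hziz, one_mul, neg_sub]
  rw [hrw]
  exact Submodule.neg_mem _ key
end
end

section
/- Let C = ⊕_{g∈G} C_g be a special vector bundle on the loop space of BG, i.e. a G-graded finite-dimensional K-vector space together with a group homomorphism G → GL(C) such that g(C_h) = C_{ghg⁻¹} for all g, h ∈ G, and such that g restricted to C_g is the identity. For commuting elements g, h ∈ G define the 2-character χ(g,h) = Tr(g: C_h → C_h). Then χ is a 2-class function, i.e. χ(kgk⁻¹, khk⁻¹) = χ(g,h) for all k ∈ G, and moreover χ(gh, h) = χ(g,h) for all commuting g, h ∈ G. -/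
noncomputable section

/-- For a special vector bundle `C = ⊕_g C_g` on the loop space `ℒBG` (a `G`-graded
finite-dimensional vector space with a `G`-action permuting the summands by conjugation and
acting as the identity on `C_g` by `g`), the 2-character
`χ(g,h) = Tr(g : C_h → C_h)` (defined for commuting `g, h`) is a 2-class function, i.e.
`χ(kgk⁻¹, khk⁻¹) = χ(g,h)` for all `k`, and moreover `χ(gh, h) = χ(g,h)`. -/
theorem two_character_class_function_and_shift
    {K : Type*} [Field K] {G : Type*} [Group G] [Fintype G] [DecidableEq G]
    {V : Type*} [AddCommGroup V] [Module K V] [FiniteDimensional K V]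
    (C : G → Submodule K V) (hinternal : DirectSum.IsInternal C)
    (ρ : G →* (V ≃ₗ[K] V))
    (hmap : ∀ g h : G, (C h).map (ρ g : V →ₗ[K] V) = C (g * h * g⁻¹))
    (hspec : ∀ g : G, ∀ v ∈ C g, ρ g v = v)
    (χ : G → G → K)
    (hχ : ∀ (g h : G) (hp : ∀ x ∈ C h, (ρ g : V →ₗ[K] V) x ∈ C h),
      χ g h = LinearMap.trace K (C h) ((ρ g : V →ₗ[K] V).restrict hp))
    (g h : G) (hcomm : g * h = h * g) :
    (∀ k : G, χ (k * g * k⁻¹) (k * h * k⁻¹) = χ g h) ∧ χ (g * h) h = χ g h := by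
  -- `ρ g` preserves `C h` when `g` and `h` commute
  have key : ∀ a b : G, a * b = b * a → ∀ x ∈ C b, (ρ a : V →ₗ[K] V) x ∈ C b := by
    intro a b hab x hx
    have : a * b * a⁻¹ = b := by rw [hab, mul_inv_cancel_right]
    rw [← this, ← hmap a b]
    exact Submodule.mem_map_of_mem hx
  have hp1 : ∀ x ∈ C h, (ρ g : V →ₗ[K] V) x ∈ C h := key g h hcomm
  constructor
  · intro k
    have hcomm' : (k * g * k⁻¹) * (k * h * k⁻¹) = (k * h * k⁻¹) * (k * g * k⁻¹) := by
      have e1 : (k * g * k⁻¹) * (k * h * k⁻¹) = k * (g * h) * k⁻¹ := by group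
      have e2 : (k * h * k⁻¹) * (k * g * k⁻¹) = k * (h * g) * k⁻¹ := by group
      rw [e1, e2, hcomm]
    have hp2 := key _ _ hcomm'
    rw [hχ _ _ hp2, hχ _ _ hp1]
    -- conjugation equivalence `C h ≃ C (k h k⁻¹)`
    let e : (C h) ≃ₗ[K] (C (k * h * k⁻¹)) :=
      ((ρ k).submoduleMap (C h)).trans (LinearEquiv.ofEq _ _ (hmap k h))
    have he : ∀ v : C h, ((e v : V)) = ρ k v := fun v => rfl
    have hconj : ((ρ (k * g * k⁻¹) : V →ₗ[K] V).restrict hp2)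
        = e.conj ((ρ g : V →ₗ[K] V).restrict hp1) := by
      apply LinearMap.ext
      intro w
      obtain ⟨v, rfl⟩ := e.surjective w
      rw [LinearEquiv.conj_apply]
      simp only [LinearMap.coe_comp, Function.comp_apply, LinearEquiv.coe_coe,
        LinearEquiv.symm_apply_apply]
      apply Subtype.ext
      rw [he]
      have h1 : (((ρ (k * g * k⁻¹) : V →ₗ[K] V).restrict hp2)
          ⟨ρ k v, (he v) ▸ (e v).2⟩ : V) = ρ (k * g * k⁻¹) (ρ k v) := rfl
      show (ρ (k * g * k⁻¹)) (ρ k v) = (ρ k) (((ρ g : V →ₗ[K] V).restrict hp1 v : V))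
      have h2 : (((ρ g : V →ₗ[K] V).restrict hp1 v : V)) = ρ g v := rfl
      rw [h2]
      have hmul : ∀ a b : G, ∀ x : V, (ρ (a * b)) x = (ρ a) ((ρ b) x) := by
        intro a b x
        rw [map_mul]; rfl
      have hthis : (k * g * k⁻¹) * k = k * g := by group
      calc (ρ (k * g * k⁻¹)) ((ρ k) v) = (ρ ((k * g * k⁻¹) * k)) v := (hmul _ _ _).symm
        _ = (ρ (k * g)) v := by rw [hthis]
        _ = (ρ k) ((ρ g) v) := hmul _ _ _
    rw [hconj, LinearMap.trace_conj']
  · have hp3 : ∀ x ∈ C h, (ρ (g * h) : V →ₗ[K] V) x ∈ C h := by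
      apply key
      conv_lhs => rw [hcomm]
      rw [mul_assoc]
    rw [hχ _ _ hp3, hχ _ _ hp1]
    congr 1
    apply LinearMap.ext
    intro v
    apply Subtype.ext
    show (ρ (g * h)) (v : V) = (ρ g) (v : V)
    rw [map_mul]
    show (ρ g) ((ρ h) (v : V)) = (ρ g) (v : V)
    rw [hspec h v v.2]
end
end
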